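/- Let α be invertible with i ∉ σ(α), Σ₀ positive definite Hermitian, and αΣ₀ − Σ₀α* = iΛ₀Λ₀*, with Σ_n defined by the FG recursion. Then Σ_n is positive definite for all n ≥ 0. -/

import Mathlib

open Matrix
open scoped ComplexOrder

lemma myPosDef_conj {n : Type*} [Fintype n] [DecidableEq n]
    {M B : Matrix n n ℂ} (hM : M.PosDef) (hB : IsUnit B) :
    (B * M * Bᴴ).PosDef := by
  have hBH : IsUnit Bᴴ := by
    rw [Matrix.isUnit_iff_isUnit_det, Matrix.det_conjTranspose]
    exact ((Matrix.isUnit_iff_isUnit_det B).mp hB).star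
  refine .of_dotProduct_mulVec_pos (isHermitian_mul_mul_conjTranspose B hM.1) fun x hx => ?_
  have hx' : Bᴴ *ᵥ x ≠ 0 := by
    intro h
    exact hx ((Matrix.mulVec_injective_iff_isUnit.mpr hBH)
      (h.trans (Matrix.mulVec_zero _).symm))
  have key : star x ⬝ᵥ (B * M * Bᴴ) *ᵥ x = star (Bᴴ *ᵥ x) ⬝ᵥ M *ᵥ (Bᴴ *ᵥ x) := by
    rw [Matrix.star_mulVec, Matrix.conjTranspose_conjTranspose, Matrix.mulVec_mulVec,
        Matrix.dotProduct_mulVec, Matrix.dotProduct_mulVec, Matrix.vecMul_vecMul,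
        Matrix.mul_assoc]
  rw [key]
  exact hM.dotProduct_mulVec_pos hx'

theorem stmt13 {N m : ℕ}
    (α : Matrix (Fin N) (Fin N) ℂ) (hα : IsUnit α)
    (hi : IsUnit (Complex.I • (1 : Matrix (Fin N) (Fin N) ℂ) - α))
    (J : Matrix (Fin m ⊕ Fin m) (Fin m ⊕ Fin m) ℂ)
    (hJ : J = Matrix.fromBlocks 1 0 0 (-1))
    (Sig : ℕ → Matrix (Fin N) (Fin N) ℂ)
    (Λ : ℕ → Matrix (Fin N) (Fin m ⊕ Fin m) ℂ)
    (hSig0 : (Sig 0).PosDef)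
    (h0 : α * Sig 0 - Sig 0 * αᴴ = Complex.I • (Λ 0 * (Λ 0)ᴴ))
    (hΛ : ∀ n, Λ (n + 1) = Λ n + Complex.I • (α⁻¹ * Λ n * J))
    (hSig : ∀ n, Sig (n + 1) =
      Sig n + α⁻¹ * Sig n * (αᴴ)⁻¹ + α⁻¹ * Λ n * J * (Λ n)ᴴ * (αᴴ)⁻¹) :
    ∀ n, (Sig n).PosDef := by
  -- basic invertibility facts
  have hαd : IsUnit α.det := (Matrix.isUnit_iff_isUnit_det α).mp hα
  have hA2 : α * α⁻¹ = 1 := Matrix.mul_nonsing_inv α hαd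
  have hA1 : α⁻¹ * α = 1 := Matrix.nonsing_inv_mul α hαd
  have hαH : IsUnit αᴴ := by
    rw [Matrix.isUnit_iff_isUnit_det, Matrix.det_conjTranspose]; exact hαd.star
  have hαHd : IsUnit (αᴴ).det := (Matrix.isUnit_iff_isUnit_det αᴴ).mp hαH
  have hA3 : αᴴ * (αᴴ)⁻¹ = 1 := Matrix.mul_nonsing_inv _ hαHd
  have hA4 : (αᴴ)⁻¹ * αᴴ = 1 := Matrix.nonsing_inv_mul _ hαHd
  -- J facts
  have hJH : Jᴴ = J := by
    rw [hJ, Matrix.fromBlocks_conjTranspose]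
    simp
  have hJJ : J * J = 1 := by
    rw [hJ]
    simp [Matrix.fromBlocks_multiply, ← Matrix.fromBlocks_one]
  -- B := 1 - i α⁻¹ is a unit
  set B : Matrix (Fin N) (Fin N) ℂ := 1 - Complex.I • α⁻¹ with hB
  have hBunit : IsUnit B := by
    have : B = α⁻¹ * (α - Complex.I • 1) := by
      rw [Matrix.mul_sub, hA1, Matrix.mul_smul, mul_one]
    rw [this]
    have h2 : IsUnit (α - Complex.I • 1) := by
      have := hi.neg; rwa [neg_sub] at this
    exact (Matrix.isUnit_nonsing_inv_iff.mpr hα).mul h2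
  have hBH : Bᴴ = 1 + Complex.I • (αᴴ)⁻¹ := by
    rw [hB]
    simp [Matrix.conjTranspose_nonsing_inv, Complex.conj_I, sub_neg_eq_add]
  -- positivity of the correction term 1 + J
  have h1J : (1 + J : Matrix (Fin m ⊕ Fin m) (Fin m ⊕ Fin m) ℂ).PosSemidef := by
    have : (1 + J : Matrix (Fin m ⊕ Fin m) (Fin m ⊕ Fin m) ℂ)
        = Matrix.diagonal (Sum.elim (fun _ => (2:ℂ)) (fun _ => 0)) := by
      rw [hJ]
      ext (i | i) (j | j) <;>
        simp [Matrix.diagonal, Matrix.one_apply, Matrix.fromBlocks] <;>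
        by_cases h : i = j <;> simp [h] <;> norm_num
    rw [this]
    refine Matrix.posSemidef_diagonal_iff.mpr fun i => ?_
    cases i <;> simp [Sum.elim] <;> norm_num
  -- main induction with the commutator invariant
  suffices h : ∀ n, (Sig n).PosDef ∧
      (α * Sig n - Sig n * αᴴ = Complex.I • (Λ n * (Λ n)ᴴ)) from fun n => (h n).1
  intro n
  induction n with
  | zero => exact ⟨hSig0, h0⟩
  | succ n ih =>
    obtain ⟨hpos, hc⟩ := ih
    set S := Sig n
    set L := Λ n
    -- derived commutator identity
    have hd : S * (αᴴ)⁻¹ - α⁻¹ * S = Complex.I • (α⁻¹ * (L * Lᴴ) * (αᴴ)⁻¹) := by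
      have h1 := congrArg (fun X => α⁻¹ * X * (αᴴ)⁻¹) hc
      simp only [Matrix.mul_sub, Matrix.sub_mul, Matrix.mul_smul, Matrix.smul_mul] at h1
      calc S * (αᴴ)⁻¹ - α⁻¹ * S
          = α⁻¹ * (α * S) * (αᴴ)⁻¹ - α⁻¹ * (S * αᴴ) * (αᴴ)⁻¹ := by
            rw [← Matrix.mul_assoc, ← Matrix.mul_assoc, hA1, one_mul, mul_assoc (α⁻¹ * S), hA3, mul_one]
        _ = Complex.I • (α⁻¹ * (L * Lᴴ) * (αᴴ)⁻¹) := by rw [h1]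
    have cancL : ∀ X : Matrix (Fin N) (Fin N) ℂ, α * (α⁻¹ * X) = X := fun X => by
      rw [← Matrix.mul_assoc, hA2, one_mul]
    have hJ2 : ∀ X : Matrix (Fin m ⊕ Fin m) (Fin N) ℂ, J * (J * X) = X := fun X => by
      rw [← Matrix.mul_assoc, hJJ, Matrix.one_mul]
    constructor
    · -- positivity
      have hC : (α⁻¹ * L)ᴴ = Lᴴ * (αᴴ)⁻¹ := by
        rw [conjTranspose_mul, Matrix.conjTranspose_nonsing_inv]
      have hBSB : B * S * Bᴴ
          = S + α⁻¹ * S * (αᴴ)⁻¹ + Complex.I • (S * (αᴴ)⁻¹ - α⁻¹ * S) := by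
        rw [hB, hBH]
        simp only [Matrix.sub_mul, Matrix.mul_add, Matrix.add_mul, Matrix.one_mul,
          Matrix.mul_one, Matrix.smul_mul, Matrix.mul_smul, smul_smul, Complex.I_mul_I,
          neg_one_smul, smul_sub, Matrix.mul_assoc]
        module
      have key : Sig (n + 1) = B * S * Bᴴ + (α⁻¹ * L) * (1 + J) * (α⁻¹ * L)ᴴ := by
        rw [hSig n, hC, hBSB, hd]
        simp only [smul_smul, Complex.I_mul_I, neg_one_smul, Matrix.mul_add,
          Matrix.add_mul, Matrix.mul_one, Matrix.mul_assoc]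
        module
      rw [key]
      exact (myPosDef_conj hpos hBunit).add_posSemidef (h1J.mul_mul_conjTranspose_same _)
    · -- invariant propagation
      have hLL : Λ (n + 1) * (Λ (n + 1))ᴴ
          = L * Lᴴ + α⁻¹ * (L * Lᴴ) * (αᴴ)⁻¹
            + Complex.I • (α⁻¹ * (L * (J * Lᴴ)))
            - Complex.I • (L * (J * (Lᴴ * (αᴴ)⁻¹))) := by
        rw [hΛ n]
        simp only [conjTranspose_add, Matrix.conjTranspose_smul, conjTranspose_mul, hJH,
          Matrix.conjTranspose_nonsing_inv, Complex.star_def, Complex.conj_I,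
          Matrix.add_mul, Matrix.mul_add, Matrix.smul_mul, Matrix.mul_smul, smul_smul,
          neg_smul, mul_neg, neg_neg, smul_neg, Matrix.mul_neg, Matrix.neg_mul,
          Complex.I_mul_I, neg_one_smul, one_smul, Matrix.mul_assoc, hJ2]
        match_scalars <;> simp [Complex.I_sq] <;> ring
      have expand : α * Sig (n + 1) - Sig (n + 1) * αᴴ
          = (α * S - S * αᴴ) + (S * (αᴴ)⁻¹ - α⁻¹ * S)
            + (L * (J * (Lᴴ * (αᴴ)⁻¹)) - α⁻¹ * (L * (J * Lᴴ))) := by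
        rw [hSig n]
        simp only [Matrix.mul_add, Matrix.add_mul, Matrix.mul_assoc, cancL, hA4, Matrix.mul_one]
        abel
      rw [expand, hc, hd, hLL]
      simp only [smul_add, smul_sub, smul_smul, Complex.I_mul_I, neg_one_smul, Matrix.mul_assoc]
      module
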